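/- Let σ be the surface measure on the unit sphere S ⊆ ℝ^d, let μ be a non-zero finite Borel measure with compact support contained in [a,b] ⊆ (0,∞), and define μ₀ by dμ₀(r) = r^{(d−1)/2} dμ(r). Define the measure μ₀·σ on ℝ^d by ∫f d(μ₀·σ) = ∫∫ f(ry) dμ₀(r) dσ(y). Then its Fourier transform satisfies, for large |ξ|, μ₀·σ^(ξ) = |ξ|^{−(d−1)/2}(c_d μ̂(−|ξ|) + c̄_d μ̂(|ξ|)) + O(|ξ|^{−(d+1)/2}), where c_d = e^{−πi(d−1)/4}; consequently dim_F(μ₀·σ) ≥ dim_F(μ) + d − 1. -/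

import Mathlib

open MeasureTheory
open scoped ENNReal Pointwise

/-- Fourier transform of a measure on `ℝ^d`. -/
noncomputable def ftR {d : ℕ} (μ : Measure (EuclideanSpace ℝ (Fin d)))
    (ξ : EuclideanSpace ℝ (Fin d)) : ℂ :=
  ∫ x, Complex.exp (((-2 * Real.pi * (inner ℝ x ξ : ℝ) : ℝ) : ℂ) * Complex.I) ∂μ

/-- Fourier dimension of a set `A ⊆ ℝ^d`. -/
noncomputable def fDimS {d : ℕ} (A : Set (EuclideanSpace ℝ (Fin d))) : ℝ :=
  sSup {s : ℝ | 0 ≤ s ∧ s ≤ d ∧ ∃ μ : Measure (EuclideanSpace ℝ (Fin d)),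
    μ ≠ 0 ∧ IsFiniteMeasure μ ∧ (∃ K, IsCompact K ∧ K ⊆ A ∧ μ Kᶜ = 0) ∧
    ∃ C : ℝ, ∀ ξ, ‖ftR μ ξ‖ ^ 2 * ‖ξ‖ ^ s ≤ C}

/-- Fourier transform of a measure on `ℝ`. -/
noncomputable def ft1 (μ : Measure ℝ) (ξ : ℝ) : ℂ :=
  ∫ x, Complex.exp (((-2 * Real.pi * x * ξ : ℝ) : ℂ) * Complex.I) ∂μ

/-- Fourier dimension of a measure on `ℝ^d`. -/
noncomputable def fDimM {d : ℕ} (μ : Measure (EuclideanSpace ℝ (Fin d))) : ℝ :=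
  sSup {s : ℝ | 0 ≤ s ∧ s ≤ d ∧ ∃ C : ℝ, ∀ ξ, ‖ftR μ ξ‖ ^ 2 * ‖ξ‖ ^ s ≤ C}

/-- Fourier dimension of a measure on `ℝ`. -/
noncomputable def fDimM1 (μ : Measure ℝ) : ℝ :=
  sSup {s : ℝ | 0 ≤ s ∧ s ≤ 1 ∧ ∃ C : ℝ, ∀ ξ, ‖ft1 μ ξ‖ ^ 2 * |ξ| ^ s ≤ C}

/-- The measure `μ · σ`, i.e. the pushforward of `μ × σ` under `(r, y) ↦ r • y`. -/
noncomputable def mulConv {d : ℕ} (μ : Measure ℝ) (σ : Measure (EuclideanSpace ℝ (Fin d))) :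
    Measure (EuclideanSpace ℝ (Fin d)) :=
  (μ.prod σ).map (fun p => p.1 • p.2)

/-- The constant `c_d = e^{-πi(d-1)/4}`. -/
noncomputable def cconst (d : ℕ) : ℂ :=
  Complex.exp (((-(Real.pi * ((d : ℝ) - 1) / 4) : ℝ) : ℂ) * Complex.I)


open scoped NNReal

set_option maxHeartbeats 1000000 in
lemma exp_I_norm (t : ℝ) : ‖Complex.exp ((t:ℂ) * Complex.I)‖ = 1 := by
  rw [Complex.norm_exp_ofReal_mul_I]

lemma exp_I_integrable {X : Type*} [MeasurableSpace X] {ν : MeasureTheory.Measure X}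
    [MeasureTheory.IsFiniteMeasure ν] {f : X → ℝ}
    (hf : MeasureTheory.AEStronglyMeasurable
      (fun x => Complex.exp ((f x : ℂ) * Complex.I)) ν) :
    MeasureTheory.Integrable (fun x => Complex.exp (((f x : ℝ):ℂ) * Complex.I)) ν :=
  MeasureTheory.Integrable.mono' (MeasureTheory.integrable_const 1) hf
    (Filter.Eventually.of_forall fun _ => le_of_eq (exp_I_norm _))

lemma cont_exp_I {X : Type*} [TopologicalSpace X] {f : X → ℝ} (hf : Continuous f) :
    Continuous (fun x => Complex.exp (((f x : ℝ):ℂ) * Complex.I)) :=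
  Complex.continuous_exp.comp ((Complex.continuous_ofReal.comp hf).mul continuous_const)

set_option maxHeartbeats 2000000 in
theorem stmt6 {d : ℕ} (hd : 1 ≤ d) (σ : Measure (EuclideanSpace ℝ (Fin d)))
    (hσ0 : σ ≠ 0) [IsFiniteMeasure σ]
    (hσsupp : σ (Metric.sphere (0 : EuclideanSpace ℝ (Fin d)) 1)ᶜ = 0)
    -- the classical asymptotic for the Fourier transform of the surface measure:
    (hσasymp : ∃ Cσ Rσ : ℝ, ∀ ξ, Rσ ≤ ‖ξ‖ →
      ‖ftR σ ξ - ((‖ξ‖ ^ (-(((d : ℝ) - 1) / 2)) : ℝ) : ℂ) *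
        (cconst d * Complex.exp (((2 * Real.pi * ‖ξ‖ : ℝ) : ℂ) * Complex.I) +
          (starRingEnd ℂ) (cconst d) *
            Complex.exp (((-2 * Real.pi * ‖ξ‖ : ℝ) : ℂ) * Complex.I))‖
        ≤ Cσ * ‖ξ‖ ^ (-(((d : ℝ) + 1) / 2)))
    (μ : Measure ℝ) (hμ0 : μ ≠ 0) [IsFiniteMeasure μ]
    (a b : ℝ) (ha : 0 < a) (hab : a ≤ b) (hμsupp : μ (Set.Icc a b)ᶜ = 0)
    (μ₀ : Measure ℝ)
    (hμ₀ : μ₀ = μ.withDensity (fun r => ENNReal.ofReal (r ^ (((d : ℝ) - 1) / 2)))) :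
    (∃ C R₀ : ℝ, ∀ ξ, R₀ ≤ ‖ξ‖ →
      ‖ftR (mulConv μ₀ σ) ξ - ((‖ξ‖ ^ (-(((d : ℝ) - 1) / 2)) : ℝ) : ℂ) *
        (cconst d * ft1 μ (-‖ξ‖) + (starRingEnd ℂ) (cconst d) * ft1 μ ‖ξ‖)‖
        ≤ C * ‖ξ‖ ^ (-(((d : ℝ) + 1) / 2))) ∧
      fDimM1 μ + ((d : ℝ) - 1) ≤ fDimM (mulConv μ₀ σ) := by

  obtain ⟨Cσ, Rσ, hσ⟩ := hσasymp
  set α : ℝ := ((d : ℝ) - 1) / 2 with hα_def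
  set β : ℝ := ((d : ℝ) + 1) / 2 with hβ_def
  have hd1 : (1:ℝ) ≤ (d:ℝ) := by exact_mod_cast hd
  have hα : 0 ≤ α := by rw [hα_def]; linarith
  have hw_meas : Measurable (fun r : ℝ => Real.toNNReal (r ^ α)) := by fun_prop
  have hae : ∀ᵐ r ∂μ, r ∈ Set.Icc a b := by
    rw [ae_iff]
    convert hμsupp using 2
    rfl
  -- μ₀ is finite
  haveI hfin : IsFiniteMeasure μ₀ := by
    constructor
    rw [hμ₀, withDensity_apply _ MeasurableSet.univ, Measure.restrict_univ,
      ← lintegral_add_compl _ (measurableSet_Icc : MeasurableSet (Set.Icc a b)),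
      setLIntegral_measure_zero _ _ hμsupp, add_zero]
    calc ∫⁻ r in Set.Icc a b, ENNReal.ofReal (r ^ α) ∂μ
        ≤ ∫⁻ _ in Set.Icc a b, ENNReal.ofReal (b ^ α) ∂μ := by
          apply setLIntegral_mono measurable_const
          intro x hx
          exact ENNReal.ofReal_le_ofReal
            (Real.rpow_le_rpow (le_trans ha.le hx.1) hx.2 hα)
      _ = ENNReal.ofReal (b ^ α) * μ (Set.Icc a b) := by
          rw [lintegral_const, Measure.restrict_apply_univ]
      _ < ⊤ := ENNReal.mul_lt_top ENNReal.ofReal_lt_top (measure_lt_top μ _)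
  -- withDensity as coe of toNNReal
  have hμ₀' : μ₀ = μ.withDensity (fun r => ((Real.toNNReal (r ^ α) : ℝ≥0) : ℝ≥0∞)) := by
    rw [hμ₀]; rfl
  have main : ∀ ξ : EuclideanSpace ℝ (Fin d), max (Rσ / a) 1 ≤ ‖ξ‖ →
      ‖ftR (mulConv μ₀ σ) ξ - ((‖ξ‖ ^ (-α) : ℝ) : ℂ) *
        (cconst d * ft1 μ (-‖ξ‖) + (starRingEnd ℂ) (cconst d) * ft1 μ ‖ξ‖)‖
        ≤ (max Cσ 0 / a * (μ Set.univ).toReal) * ‖ξ‖ ^ (-β) := by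
    intro ξ hξ
    set x := ‖ξ‖ with hx_def
    have hx1 : (1:ℝ) ≤ x := le_trans (le_max_right _ _) hξ
    have hx0 : (0:ℝ) < x := lt_of_lt_of_le one_pos hx1
    -- the kernel as iterated integral
    have hm : Measurable (fun p : ℝ × EuclideanSpace ℝ (Fin d) => p.1 • p.2) :=
      measurable_fst.smul measurable_snd
    have hcont : Continuous (fun y : EuclideanSpace ℝ (Fin d) =>
        Complex.exp (((-2 * Real.pi * (inner ℝ y ξ : ℝ) : ℝ) : ℂ) * Complex.I)) :=
      cont_exp_I (continuous_const.mul (continuous_id.inner continuous_const))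
    have hcontp : Continuous (fun p : ℝ × EuclideanSpace ℝ (Fin d) =>
        Complex.exp (((-2 * Real.pi * (inner ℝ (p.1 • p.2) ξ : ℝ) : ℝ) : ℂ) * Complex.I)) :=
      cont_exp_I (continuous_const.mul
        ((continuous_fst.smul continuous_snd).inner continuous_const))
    have hint_prod : Integrable (fun p : ℝ × EuclideanSpace ℝ (Fin d) =>
        Complex.exp (((-2 * Real.pi * (inner ℝ (p.1 • p.2) ξ : ℝ) : ℝ) : ℂ) * Complex.I))
        (μ₀.prod σ) :=
      exp_I_integrable hcontp.aestronglyMeasurable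
    have hfib : ∀ r : ℝ, (∫ y, Complex.exp
        (((-2 * Real.pi * (inner ℝ (r • y) ξ : ℝ) : ℝ) : ℂ) * Complex.I) ∂σ) = ftR σ (r • ξ) := by
      intro r
      rw [ftR]
      simp only [real_inner_smul_left, real_inner_smul_right]
    have key : ftR (mulConv μ₀ σ) ξ = ∫ r, ((Real.toNNReal (r ^ α) : ℝ)) •
        ftR σ (r • ξ) ∂μ := by
      rw [ftR, mulConv, integral_map hm.aemeasurable hcont.aestronglyMeasurable,
        integral_prod _ hint_prod]
      rw [hμ₀', integral_withDensity_eq_integral_smul hw_meas]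
      simp only [hfib, NNReal.smul_def]
    -- integrability of the two functions of r
    have hint1 : Integrable (fun r => ((Real.toNNReal (r ^ α) : ℝ)) • ftR σ (r • ξ)) μ := by
      have h1 : Integrable (fun r => ∫ y, Complex.exp
          (((-2 * Real.pi * (inner ℝ (r • y) ξ : ℝ) : ℝ) : ℂ) * Complex.I) ∂σ) μ₀ :=
        hint_prod.integral_prod_left
      have h2 : Integrable (fun r => ftR σ (r • ξ)) μ₀ := by
        simp only [hfib] at h1; exact h1
      rw [hμ₀'] at h2
      exact (integrable_withDensity_iff_integrable_smul hw_meas).1 h2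
    have hintE : ∀ t : ℝ, Integrable
        (fun r : ℝ => Complex.exp (((-2 * Real.pi * r * t : ℝ) : ℂ) * Complex.I)) μ := fun t =>
      exp_I_integrable (cont_exp_I (by fun_prop)).aestronglyMeasurable
    have hint2 : Integrable (fun r : ℝ => (x ^ (-α) : ℝ) •
        (cconst d * Complex.exp (((-2 * Real.pi * r * (-x) : ℝ) : ℂ) * Complex.I)
          + (starRingEnd ℂ) (cconst d) *
            Complex.exp (((-2 * Real.pi * r * x : ℝ) : ℂ) * Complex.I))) μ :=
      (((hintE (-x)).const_mul _).add ((hintE x).const_mul _)).smul (x ^ (-α) : ℝ)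
    have hf₂def : ((x ^ (-α) : ℝ) : ℂ) * (cconst d * ft1 μ (-x) + (starRingEnd ℂ) (cconst d) * ft1 μ x)
        = ∫ r, (x ^ (-α) : ℝ) •
            (cconst d * Complex.exp (((-2 * Real.pi * r * (-x) : ℝ) : ℂ) * Complex.I)
              + (starRingEnd ℂ) (cconst d) *
                Complex.exp (((-2 * Real.pi * r * x : ℝ) : ℂ) * Complex.I)) ∂μ := by
      rw [integral_smul, integral_add ((hintE (-x)).const_mul _) ((hintE x).const_mul _),
        integral_const_mul, integral_const_mul, ft1, ft1, Complex.real_smul]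
    rw [key, hf₂def, ← integral_sub hint1 hint2]
    have hβpos : (0:ℝ) < β := by rw [hβ_def]; linarith
    calc ‖∫ r, ((Real.toNNReal (r ^ α) : ℝ)) • ftR σ (r • ξ)
          - (x ^ (-α) : ℝ) •
            (cconst d * Complex.exp (((-2 * Real.pi * r * (-x) : ℝ) : ℂ) * Complex.I)
              + (starRingEnd ℂ) (cconst d) *
                Complex.exp (((-2 * Real.pi * r * x : ℝ) : ℂ) * Complex.I)) ∂μ‖
        ≤ (max Cσ 0 / a * x ^ (-β)) * (μ Set.univ).toReal := by
          apply norm_integral_le_of_norm_le_const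
          filter_upwards [hae] with r hr
          have hr0 : 0 < r := lt_of_lt_of_le ha hr.1
          have hrx : ‖r • ξ‖ = r * x := by
            rw [norm_smul, Real.norm_eq_abs, abs_of_pos hr0]
          have hRσ' : Rσ ≤ ‖r • ξ‖ := by
            rw [hrx]
            have h1 : Rσ ≤ a * x := by
              rw [← div_le_iff₀' ha]
              exact le_trans (le_max_left _ _) hξ
            exact le_trans h1 (mul_le_mul_of_nonneg_right hr.1 hx0.le)
          have hb := hσ (r • ξ) hRσ'
          rw [hrx] at hb
          have e1 : ((-2 * Real.pi * r * (-x) : ℝ) : ℂ) = ((2 * Real.pi * (r * x) : ℝ) : ℂ) := by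
            push_cast; ring
          have e2 : ((-2 * Real.pi * r * x : ℝ) : ℂ) = ((-2 * Real.pi * (r * x) : ℝ) : ℂ) := by
            push_cast; ring
          have hscal : r ^ α * (r * x) ^ (-α) = x ^ (-α) := by
            rw [Real.mul_rpow hr0.le hx0.le, ← mul_assoc, ← Real.rpow_add hr0]
            simp
          have key2 : ((Real.toNNReal (r ^ α) : ℝ)) • ftR σ (r • ξ)
              - (x ^ (-α) : ℝ) •
                (cconst d * Complex.exp (((-2 * Real.pi * r * (-x) : ℝ) : ℂ) * Complex.I)
                  + (starRingEnd ℂ) (cconst d) *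
                    Complex.exp (((-2 * Real.pi * r * x : ℝ) : ℂ) * Complex.I))
              = (r ^ α : ℝ) • (ftR σ (r • ξ)
                - (((r * x) ^ (-α) : ℝ) : ℂ) *
                  (cconst d * Complex.exp (((2 * Real.pi * (r * x) : ℝ) : ℂ) * Complex.I)
                    + (starRingEnd ℂ) (cconst d) *
                      Complex.exp (((-2 * Real.pi * (r * x) : ℝ) : ℂ) * Complex.I))) := by
            rw [smul_sub, Real.coe_toNNReal _ (Real.rpow_nonneg hr0.le α), e1, e2]
            congr 1
            rw [Complex.real_smul, Complex.real_smul,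
              show ((x ^ (-α) : ℝ) : ℂ) = ((r ^ α : ℝ) : ℂ) * (((r * x) ^ (-α) : ℝ) : ℂ) by
                rw [← Complex.ofReal_mul, hscal], mul_assoc]
          rw [key2, norm_smul, Real.norm_eq_abs, abs_of_nonneg (Real.rpow_nonneg hr0.le α)]
          have hrxpos : (0:ℝ) < r * x := mul_pos hr0 hx0
          calc r ^ α * ‖_‖ ≤ r ^ α * (Cσ * (r * x) ^ (-β)) :=
                mul_le_mul_of_nonneg_left hb (Real.rpow_nonneg hr0.le α)
            _ ≤ r ^ α * (max Cσ 0 * (r * x) ^ (-β)) := by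
                gcongr
                exact le_max_left _ _
            _ = max Cσ 0 * (r ^ α * (r ^ (-β) * x ^ (-β))) := by
                rw [Real.mul_rpow hr0.le hx0.le]; ring
            _ = max Cσ 0 * (r ^ (α + -β) * x ^ (-β)) := by rw [Real.rpow_add hr0]; ring
            _ = max Cσ 0 * (r⁻¹ * x ^ (-β)) := by
                have : α + -β = -1 := by rw [hα_def, hβ_def]; ring
                rw [this, Real.rpow_neg_one]
            _ ≤ max Cσ 0 * (a⁻¹ * x ^ (-β)) := by
                gcongr
                exact hr.1
            _ = max Cσ 0 / a * x ^ (-β) := by rw [div_eq_mul_inv]; ring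
      _ = max Cσ 0 / a * (μ Set.univ).toReal * x ^ (-β) := by ring

  refine ⟨⟨max Cσ 0 / a * (μ Set.univ).toReal, max (Rσ / a) 1, main⟩, ?_⟩
  -- Part 2: Fourier dimension bound
  set ν := mulConv μ₀ σ with hν_def
  haveI : IsFiniteMeasure ν := by rw [hν_def, mulConv]; infer_instance
  set C : ℝ := max Cσ 0 / a * (μ Set.univ).toReal with hC_def
  set R₀ : ℝ := max (Rσ / a) 1 with hR₀_def
  have hC0 : 0 ≤ C := mul_nonneg (div_nonneg (le_max_right _ _) ha.le) ENNReal.toReal_nonneg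
  have hR₀1 : (1:ℝ) ≤ R₀ := le_max_right _ _
  set M : ℝ := (ν Set.univ).toReal with hM_def
  have hM0 : 0 ≤ M := ENNReal.toReal_nonneg
  have hν_norm : ∀ ζ, ‖ftR ν ζ‖ ≤ M := by
    intro ζ
    calc ‖ftR ν ζ‖ ≤ 1 * (ν Set.univ).toReal :=
          norm_integral_le_of_norm_le_const
            (Filter.Eventually.of_forall fun y => le_of_eq (exp_I_norm _))
      _ = M := one_mul _
  have hft1_norm : ∀ t : ℝ, ‖ft1 μ t‖ ≤ (μ Set.univ).toReal := by
    intro t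
    calc ‖ft1 μ t‖ ≤ 1 * (μ Set.univ).toReal :=
          norm_integral_le_of_norm_le_const
            (Filter.Eventually.of_forall fun y => le_of_eq (exp_I_norm _))
      _ = _ := one_mul _
  have hcnorm : ‖cconst d‖ = 1 := exp_I_norm _
  have hcnorm' : ‖(starRingEnd ℂ) (cconst d)‖ = 1 := by
    rw [RCLike.norm_conj]; exact hcnorm
  rw [fDimM1, fDimM]
  have hS₁ne : Set.Nonempty {s : ℝ | 0 ≤ s ∧ s ≤ 1 ∧
      ∃ C : ℝ, ∀ ξ, ‖ft1 μ ξ‖ ^ 2 * |ξ| ^ s ≤ C} := by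
    refine ⟨0, le_refl 0, zero_le_one, (μ Set.univ).toReal ^ 2, fun ζ => ?_⟩
    rw [Real.rpow_zero, mul_one]
    exact pow_le_pow_left₀ (norm_nonneg _) (hft1_norm ζ) 2
  have hS₂bdd : BddAbove {s : ℝ | 0 ≤ s ∧ s ≤ (d:ℝ) ∧
      ∃ C : ℝ, ∀ ξ, ‖ftR ν ξ‖ ^ 2 * ‖ξ‖ ^ s ≤ C} := ⟨d, fun s hs => hs.2.1⟩
  have hstep : ∀ s ∈ {s : ℝ | 0 ≤ s ∧ s ≤ 1 ∧
      ∃ C : ℝ, ∀ ξ, ‖ft1 μ ξ‖ ^ 2 * |ξ| ^ s ≤ C},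
      s + ((d:ℝ) - 1) ∈ {s : ℝ | 0 ≤ s ∧ s ≤ (d:ℝ) ∧
      ∃ C : ℝ, ∀ ξ, ‖ftR ν ξ‖ ^ 2 * ‖ξ‖ ^ s ≤ C} := by
    rintro s ⟨hs0, hs1, C₁, hC₁⟩
    have hC₁0 : 0 ≤ C₁ := le_trans (by positivity) (hC₁ 0)
    refine ⟨by linarith, by linarith,
      max (M ^ 2 * R₀ ^ (s + ((d:ℝ) - 1))) (8 * C₁ + 2 * C ^ 2), fun ζ => ?_⟩
    have hsd0 : (0:ℝ) ≤ s + ((d:ℝ) - 1) := by linarith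
    rcases lt_or_ge ‖ζ‖ R₀ with h | h
    · refine le_trans ?_ (le_max_left _ _)
      have h1 : ‖ζ‖ ^ (s + ((d:ℝ) - 1)) ≤ R₀ ^ (s + ((d:ℝ) - 1)) :=
        Real.rpow_le_rpow (norm_nonneg _) h.le hsd0
      have h2 : ‖ftR ν ζ‖ ^ 2 ≤ M ^ 2 := pow_le_pow_left₀ (norm_nonneg _) (hν_norm ζ) 2
      exact mul_le_mul h2 h1 (Real.rpow_nonneg (norm_nonneg _) _) (by positivity)
    · refine le_trans ?_ (le_max_right _ _)
      set y : ℝ := ‖ζ‖ with hy_def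
      have hy1 : (1:ℝ) ≤ y := le_trans hR₀1 h
      have hy0 : (0:ℝ) < y := lt_of_lt_of_le one_pos hy1
      set u : ℝ := ‖ft1 μ (-y)‖ with hu_def
      set v : ℝ := ‖ft1 μ y‖ with hv_def
      set p : ℝ := y ^ (-α) with hp_def
      set q : ℝ := y ^ (-β) with hq_def
      have hp0 : 0 ≤ p := Real.rpow_nonneg hy0.le _
      have hq0 : 0 ≤ q := Real.rpow_nonneg hy0.le _
      have hu0 : 0 ≤ u := norm_nonneg _
      have hv0 : 0 ≤ v := norm_nonneg _
      have hB : ‖((y ^ (-α) : ℝ) : ℂ) * (cconst d * ft1 μ (-y)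
          + (starRingEnd ℂ) (cconst d) * ft1 μ y)‖ ≤ p * (u + v) := by
        rw [norm_mul, Complex.norm_real, Real.norm_eq_abs,
          abs_of_nonneg (Real.rpow_nonneg hy0.le _)]
        refine mul_le_mul_of_nonneg_left ?_ hp0
        calc ‖cconst d * ft1 μ (-y) + (starRingEnd ℂ) (cconst d) * ft1 μ y‖
            ≤ ‖cconst d * ft1 μ (-y)‖ + ‖(starRingEnd ℂ) (cconst d) * ft1 μ y‖ :=
              norm_add_le _ _
          _ = u + v := by rw [norm_mul, norm_mul, hcnorm, hcnorm', one_mul, one_mul]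
      have htri : ‖ftR ν ζ‖ ≤ p * (u + v) + C * q := by
        calc ‖ftR ν ζ‖ = ‖(ftR ν ζ - ((y ^ (-α) : ℝ) : ℂ) * (cconst d * ft1 μ (-y)
              + (starRingEnd ℂ) (cconst d) * ft1 μ y))
              + ((y ^ (-α) : ℝ) : ℂ) * (cconst d * ft1 μ (-y)
              + (starRingEnd ℂ) (cconst d) * ft1 μ y)‖ := by rw [sub_add_cancel]
          _ ≤ ‖ftR ν ζ - ((y ^ (-α) : ℝ) : ℂ) * (cconst d * ft1 μ (-y)
              + (starRingEnd ℂ) (cconst d) * ft1 μ y)‖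
              + ‖((y ^ (-α) : ℝ) : ℂ) * (cconst d * ft1 μ (-y)
              + (starRingEnd ℂ) (cconst d) * ft1 μ y)‖ := norm_add_le _ _
          _ ≤ C * q + (p * (u + v)) := add_le_add (main ζ h) hB
          _ = p * (u + v) + C * q := by ring
      have h2 : ‖ftR ν ζ‖ ^ 2 ≤ (p * (u + v) + C * q) ^ 2 :=
        pow_le_pow_left₀ (norm_nonneg _) htri 2
      have hexp : (p * (u + v) + C * q) ^ 2
          ≤ 4 * u ^ 2 * (p * p) + 4 * v ^ 2 * (p * p) + 2 * C ^ 2 * (q * q) := by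
        nlinarith [sq_nonneg (p * (u - v)), sq_nonneg (p * (u + v) - C * q),
          mul_nonneg hp0 hp0, mul_nonneg hq0 hq0, sq_nonneg (u + v)]
      have e₁ : p * p * y ^ (s + ((d:ℝ) - 1)) = y ^ s := by
        rw [hp_def, ← Real.rpow_add hy0, ← Real.rpow_add hy0]
        congr 1
        rw [hα_def]; ring
      have e₂ : q * q * y ^ (s + ((d:ℝ) - 1)) = y ^ (s - 2) := by
        rw [hq_def, ← Real.rpow_add hy0, ← Real.rpow_add hy0]
        congr 1
        rw [hβ_def]; ring
      have e₃ : y ^ (s - 2) ≤ 1 :=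
        Real.rpow_le_one_of_one_le_of_nonpos hy1 (by linarith)
      have hu2 : u ^ 2 * y ^ s ≤ C₁ := by
        have := hC₁ (-y)
        rwa [abs_neg, abs_of_pos hy0] at this
      have hv2 : v ^ 2 * y ^ s ≤ C₁ := by
        have := hC₁ y
        rwa [abs_of_pos hy0] at this
      calc ‖ftR ν ζ‖ ^ 2 * y ^ (s + ((d:ℝ) - 1))
          ≤ (4 * u ^ 2 * (p * p) + 4 * v ^ 2 * (p * p) + 2 * C ^ 2 * (q * q))
              * y ^ (s + ((d:ℝ) - 1)) := by
            apply mul_le_mul_of_nonneg_right (le_trans h2 hexp)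
              (Real.rpow_nonneg hy0.le _)
        _ = 4 * (u ^ 2 * (p * p * y ^ (s + ((d:ℝ) - 1))))
            + 4 * (v ^ 2 * (p * p * y ^ (s + ((d:ℝ) - 1))))
            + 2 * C ^ 2 * (q * q * y ^ (s + ((d:ℝ) - 1))) := by ring
        _ = 4 * (u ^ 2 * y ^ s) + 4 * (v ^ 2 * y ^ s) + 2 * C ^ 2 * y ^ (s - 2) := by
            rw [e₁, e₂]
        _ ≤ 4 * C₁ + 4 * C₁ + 2 * C ^ 2 * 1 := by
            gcongr
        _ = 8 * C₁ + 2 * C ^ 2 := by ring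
  have hfinal : ∀ s ∈ {s : ℝ | 0 ≤ s ∧ s ≤ 1 ∧
      ∃ C : ℝ, ∀ ξ, ‖ft1 μ ξ‖ ^ 2 * |ξ| ^ s ≤ C},
      s ≤ sSup {s : ℝ | 0 ≤ s ∧ s ≤ (d:ℝ) ∧
      ∃ C : ℝ, ∀ ξ, ‖ftR ν ξ‖ ^ 2 * ‖ξ‖ ^ s ≤ C} - ((d:ℝ) - 1) := by
    intro s hs
    have := le_csSup hS₂bdd (hstep s hs)
    linarith
  have h2 := csSup_le hS₁ne hfinal
  linarith
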